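/- (Lemma on shrinking predecessor sets) Let v be a vertex of a DAG with ranked set L and uniformly random bijective ranking r : L → {1,...,λ}. Fix a decreasing sequence of nonempty sets Γ_1 ⊃ Γ_2 ⊃ ... ⊃ Γ_j of ranked vertices and condition on the event that A_i^r(v) = Γ_i for all 1 ≤ i ≤ j (assuming this event has positive probability). Then for any x ∈ [0,1], Pr[ |A_{j+1}^r(v)| ≤ x·|Γ_j| ] ≥ x under this conditional distribution. -/

import Mathlib

open Classical Finset
open scoped Classical

noncomputable section

variable {V : Type*}

/-- Reachability: `reach adj u v` iff there is a directed path from `u` to `v`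
(including the trivial path, so `reach adj v v` always holds). -/
def reach (adj : V → V → Prop) : V → V → Prop := Relation.ReflTransGen adj

/-- The graph has no (nontrivial) directed cycle. -/
def IsAcyclic (adj : V → V → Prop) : Prop := ∀ x, ¬ Relation.TransGen adj x x

/-- `P(v)`: the set of predecessors of `v` (vertices with a path to `v`, including `v`). -/
def predSet [Fintype V] (adj : V → V → Prop) (v : V) : Finset V :=
  Finset.univ.filter fun u => reach adj u v

/-- `S(v)`: the set of successors of `v` (vertices reachable from `v`, including `v`). -/
def succSet [Fintype V] (adj : V → V → Prop) (v : V) : Finset V :=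
  Finset.univ.filter fun u => reach adj v u

/-- The element of `A` of minimum rank (an arbitrary vertex if `A = ∅`). -/
def argminR [Nonempty V] (r : V → ℕ∞) (A : Finset V) : V :=
  if h : A.Nonempty then (Finset.exists_min_image A r h).choose else Classical.arbitrary V

/-- The sets `A_{i+1}(v)` (0-indexed: `Aset adj L r v i` is the paper's `A_{i+1}(v)`):
`A_1(v) = P(v) ∩ L`, and `A_{i+1}(v) = (S(ℓ_i(v)) ∩ P(v) ∩ L) \ {ℓ_i(v)}` where
`ℓ_i(v)` is the minimum-rank element of `A_i(v)`. -/
def Aset [Fintype V] [Nonempty V] (adj : V → V → Prop) (L : Finset V) (r : V → ℕ∞)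
    (v : V) : ℕ → Finset V
  | 0 => predSet adj v ∩ L
  | i + 1 =>
    if (Aset adj L r v i).Nonempty then
      (succSet adj (argminR r (Aset adj L r v i)) ∩ predSet adj v ∩ L).erase
        (argminR r (Aset adj L r v i))
    else ∅

/-- `ℓ_{i+1}(v)` (0-indexed). -/
def labVertex [Fintype V] [Nonempty V] (adj : V → V → Prop) (L : Finset V) (r : V → ℕ∞)
    (v : V) (i : ℕ) : V := argminR r (Aset adj L r v i)

/-- `k(v)`: the number of indices `i` with `A_{i+1}(v) ≠ ∅` (in a DAG the sets shrink,
so this is the largest `i` with `A_i(v) ≠ ∅`, in the paper's 1-indexed convention). -/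
def kOf [Fintype V] [Nonempty V] (adj : V → V → Prop) (L : Finset V) (r : V → ℕ∞) (v : V) : ℕ :=
  ((Finset.range (Fintype.card V + 1)).filter fun i => (Aset adj L r v i).Nonempty).card

/-- The label `ℓ(v) = (ℓ_1(v), …, ℓ_{k(v)}(v))`. -/
def labelSeq [Fintype V] [Nonempty V] (adj : V → V → Prop) (L : Finset V) (r : V → ℕ∞)
    (v : V) : List V :=
  (List.range (kOf adj L r v)).map (labVertex adj L r v)

/-- The rank sequence `r(ℓ(v))` with `+∞` appended. -/
def rankSeq [Fintype V] [Nonempty V] (adj : V → V → Prop) (L : Finset V) (r : V → ℕ∞)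
    (v : V) : List ℕ∞ :=
  ((labelSeq adj L r v).map r) ++ [⊤]

/-- `ℓ(u) ≺ ℓ(v)`: decreasing lexicographic order on the rank sequences with `+∞` appended. -/
def labLt [Fintype V] [Nonempty V] (adj : V → V → Prop) (L : Finset V) (r : V → ℕ∞)
    (u v : V) : Prop :=
  List.Lex (· < ·) (rankSeq adj L r v) (rankSeq adj L r u)


set_option linter.unusedSectionVars false
set_option linter.unusedVariables false

section Aux
variable [Fintype V] [Nonempty V]

lemma Aset_zero (adj : V → V → Prop) (L : Finset V) (r : V → ℕ∞) (v : V) :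
    Aset adj L r v 0 = predSet adj v ∩ L := rfl

lemma Aset_succ_def (adj : V → V → Prop) (L : Finset V) (r : V → ℕ∞) (v : V) (i : ℕ) :
    Aset adj L r v (i+1) = if (Aset adj L r v i).Nonempty then
      (succSet adj (argminR r (Aset adj L r v i)) ∩ predSet adj v ∩ L).erase
        (argminR r (Aset adj L r v i)) else ∅ := rfl

lemma argminR_mem (r : V → ℕ∞) {A : Finset V} (h : A.Nonempty) : argminR r A ∈ A := by
  rw [argminR, dif_pos h]; exact (Finset.exists_min_image A r h).choose_spec.1

lemma argminR_le (r : V → ℕ∞) {A : Finset V} (h : A.Nonempty) {u : V} (hu : u ∈ A) :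
    r (argminR r A) ≤ r u := by
  rw [argminR, dif_pos h]; exact (Finset.exists_min_image A r h).choose_spec.2 u hu

lemma argminR_eq (r : V → ℕ∞) {A : Finset V} (h : A.Nonempty) {w : V} (hw : w ∈ A)
    (hmin : ∀ u ∈ A, u ≠ w → r w < r u) : argminR r A = w := by
  by_contra hne
  exact absurd (argminR_le r h hw) (not_le.mpr (hmin _ (argminR_mem r h) hne))

lemma argminR_lt (r : V → ℕ∞) {A : Finset V} (h : A.Nonempty)
    (hinj : ∀ u ∈ A, ∀ u' ∈ A, r u = r u' → u = u') {u : V} (hu : u ∈ A)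
    (hne : u ≠ argminR r A) : r (argminR r A) < r u :=
  lt_of_le_of_ne (argminR_le r h hu)
    (fun he => hne (hinj u hu _ (argminR_mem r h) he.symm))

lemma Aset_subset_L (adj : V → V → Prop) (L : Finset V) (r : V → ℕ∞) (v : V) :
    ∀ i, Aset adj L r v i ⊆ L
  | 0 => Finset.inter_subset_right
  | i+1 => by
    rw [Aset_succ_def]; split
    · exact (Finset.erase_subset _ _).trans Finset.inter_subset_right
    · exact Finset.empty_subset _

lemma Aset_nonempty_of_succ {adj : V → V → Prop} {L : Finset V} {r : V → ℕ∞} {v : V} {i : ℕ}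
    (h : (Aset adj L r v (i+1)).Nonempty) : (Aset adj L r v i).Nonempty := by
  by_contra hc
  rw [Aset_succ_def, if_neg hc] at h
  simp at h

lemma Aset_succ_subset {adj : V → V → Prop} (hacyc : IsAcyclic adj) (L : Finset V)
    (r : V → ℕ∞) (v : V) (i : ℕ) : Aset adj L r v (i+1) ⊆ Aset adj L r v i := by
  by_cases h1 : (Aset adj L r v i).Nonempty
  · rw [Aset_succ_def, if_pos h1]
    intro u hu
    rw [Finset.mem_erase] at hu
    obtain ⟨hune, hu⟩ := hu
    simp only [Finset.mem_inter, succSet, predSet, Finset.mem_filter, Finset.mem_univ,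
      true_and] at hu
    obtain ⟨⟨hreach, hpred⟩, huL⟩ := hu
    match i, h1 with
    | 0, h1 =>
      simp only [Aset_zero, Finset.mem_inter, predSet, Finset.mem_filter, Finset.mem_univ,
        true_and]
      exact ⟨hpred, huL⟩
    | k+1, h1 =>
      have h0 : (Aset adj L r v k).Nonempty := Aset_nonempty_of_succ h1
      set ℓk := argminR r (Aset adj L r v k)
      set ℓ := argminR r (Aset adj L r v (k+1))
      have hℓ : ℓ ∈ Aset adj L r v (k+1) := argminR_mem r h1
      rw [Aset_succ_def, if_pos h0] at hℓ ⊢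
      rw [Finset.mem_erase] at hℓ
      obtain ⟨hℓne, hℓmem⟩ := hℓ
      simp only [Finset.mem_inter, succSet, predSet, Finset.mem_filter, Finset.mem_univ,
        true_and] at hℓmem
      obtain ⟨⟨hℓreach, _⟩, _⟩ := hℓmem
      have hℓtrans : Relation.TransGen adj ℓk ℓ :=
        (Relation.reflTransGen_iff_eq_or_transGen.mp hℓreach).resolve_left
          (fun he => hℓne he)
      rw [Finset.mem_erase]
      refine ⟨fun he => ?_, ?_⟩
      · subst he
        exact hacyc ℓk (hℓtrans.trans_left hreach)
      · simp only [Finset.mem_inter, succSet, predSet, Finset.mem_filter, Finset.mem_univ,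
          true_and]
        exact ⟨⟨(hℓtrans.to_reflTransGen).trans hreach, hpred⟩, huL⟩
  · rw [Aset_succ_def, if_neg h1]
    exact Finset.empty_subset _

lemma Aset_succ_congr {adj : V → V → Prop} {L : Finset V} {v : V} {r r' : V → ℕ∞} {i : ℕ}
    (h : Aset adj L r v i = Aset adj L r' v i)
    (hm : argminR r (Aset adj L r v i) = argminR r' (Aset adj L r' v i)) :
    Aset adj L r v (i+1) = Aset adj L r' v (i+1) := by
  rw [h] at hm
  rw [Aset_succ_def, Aset_succ_def, h, hm]

end Aux

lemma argminR_not_mem_Aset_succ [Fintype V] [Nonempty V] {adj : V → V → Prop} {L : Finset V}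
    {r : V → ℕ∞} {v : V} {i : ℕ} (h : (Aset adj L r v i).Nonempty) :
    argminR r (Aset adj L r v i) ∉ Aset adj L r v (i+1) := by
  rw [Aset_succ_def, if_pos h]
  exact Finset.notMem_erase _ _

lemma Aset_succ_key [Fintype V] [Nonempty V] {adj : V → V → Prop} (hacyc : IsAcyclic adj)
    {L : Finset V} {r : V → ℕ∞} {v : V} {i : ℕ} (h : (Aset adj L r v i).Nonempty) :
    ∀ u ∈ Aset adj L r v (i+1), u ∈ Aset adj L r v i ∧
      Relation.TransGen adj (argminR r (Aset adj L r v i)) u := by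
  intro u hu
  refine ⟨Aset_succ_subset hacyc L r v i hu, ?_⟩
  rw [Aset_succ_def, if_pos h, Finset.mem_erase] at hu
  obtain ⟨hune, humem⟩ := hu
  simp only [Finset.mem_inter, succSet, Finset.mem_filter, Finset.mem_univ, true_and] at humem
  exact (Relation.reflTransGen_iff_eq_or_transGen.mp humem.1.1).resolve_left hune

/-- Lemma 1 of the paper: conditioned on `A_i^r(v) = Γ_i` for `1 ≤ i ≤ j`
(a nonempty event over uniformly random bijective rankings `r : L → {1,…,λ}`), for any
`x ∈ [0,1]` the probability that `|A_{j+1}^r(v)| ≤ x·|Γ_j|` is at least `x`.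
(0-indexed: `Aset … (i-1)` is the paper's `A_i`, so the condition is on indices `< j`
and the conclusion concerns `Aset … j = A_{j+1}`.) -/
theorem shrinking_predecessor_sets [Fintype V] [DecidableEq V] [Nonempty V]
    (adj : V → V → Prop) (hacyc : IsAcyclic adj)
    (L : Finset V) (v : V) (j : ℕ) (hj : 0 < j)
    (Γ : ℕ → Finset V)
    (hΓL : ∀ i < j, Γ i ⊆ L) (hΓne : ∀ i < j, (Γ i).Nonempty)
    (hchain : ∀ i : ℕ, i + 1 < j → Γ (i + 1) ⊂ Γ i)
    (rOf : ({x // x ∈ L} ≃ Fin L.card) → V → ℕ∞)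
    (hrOf : ∀ ρ w, rOf ρ w = if h : w ∈ L then (((ρ ⟨w, h⟩ : ℕ) + 1 : ℕ) : ℕ∞) else ⊤)
    (Rset : Finset ({x // x ∈ L} ≃ Fin L.card))
    (hRset : Rset = Finset.univ.filter fun ρ => ∀ i < j, Aset adj L (rOf ρ) v i = Γ i)
    (hne : Rset.Nonempty) :
    ∀ x ∈ Set.Icc (0 : ℝ) 1,
      x * (Rset.card : ℝ) ≤
        ((Rset.filter fun ρ =>
          ((Aset adj L (rOf ρ) v j).card : ℝ) ≤ x * ((Γ (j - 1)).card : ℝ)).card : ℝ) := by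
  intro x hx
  obtain ⟨hx0, hx1⟩ := hx
  set Γ' : Finset V := Γ (j - 1) with hΓ'
  have hj1 : j - 1 + 1 = j := Nat.succ_pred_eq_of_pos hj
  have hj1lt : j - 1 < j := Nat.pred_lt hj.ne'
  have hΓ'ne : Γ'.Nonempty := hΓne _ hj1lt
  have hΓ'L : Γ' ⊆ L := hΓL _ hj1lt
  set m : ℕ := Γ'.card with hm
  have hm0 : 0 < m := Finset.card_pos.mpr hΓ'ne
  -- injectivity of rOf on L
  have hrinj : ∀ ρ : ({x // x ∈ L} ≃ Fin L.card), ∀ u ∈ L, ∀ u' ∈ L,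
      rOf ρ u = rOf ρ u' → u = u' := by
    intro ρ u hu u' hu' h
    rw [hrOf, hrOf, dif_pos hu, dif_pos hu'] at h
    have h2 : ((ρ ⟨u, hu⟩ : ℕ) + 1 : ℕ) = ((ρ ⟨u', hu'⟩ : ℕ) + 1 : ℕ) := by exact_mod_cast h
    have h3 : ρ ⟨u, hu⟩ = ρ ⟨u', hu'⟩ := Fin.ext (by omega)
    simpa using congrArg Subtype.val (ρ.injective h3)
  -- monotonicity of Γ
  have hΓmono : ∀ a b : ℕ, a ≤ b → b < j → Γ b ⊆ Γ a := by
    intro a b hab hbj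
    induction b with
    | zero => rw [Nat.le_zero.mp hab]
    | succ k ih =>
      rcases Nat.eq_or_lt_of_le hab with rfl | h
      · exact subset_rfl
      · exact (hchain k hbj).subset.trans (ih (Nat.lt_succ_iff.mp h) (Nat.lt_of_succ_lt hbj))
  have hmemR : ∀ ρ, ρ ∈ Rset ↔ ∀ i < j, Aset adj L (rOf ρ) v i = Γ i := by
    intro ρ; rw [hRset]; simp
  set f : ({x // x ∈ L} ≃ Fin L.card) → V := fun ρ => argminR (rOf ρ) Γ' with hf
  have hfmem : ∀ ρ, f ρ ∈ Γ' := fun ρ => argminR_mem _ hΓ'ne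
  -- swap formula
  have hswapr : ∀ (ρ : ({x // x ∈ L} ≃ Fin L.card)) (w : V) (hw : w ∈ L) (w' : V)
      (hw' : w' ∈ L) (u : V),
      rOf ((Equiv.swap (⟨w, hw⟩ : {x // x ∈ L}) ⟨w', hw'⟩).trans ρ) u
        = rOf ρ (Equiv.swap w w' u) := by
    intro ρ w hw w' hw' u
    by_cases huL : u ∈ L
    · have hcoe : ((Equiv.swap (⟨w, hw⟩ : {x // x ∈ L}) ⟨w', hw'⟩ ⟨u, huL⟩ : {x // x ∈ L}) : V)
          = Equiv.swap w w' u := by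
        rcases eq_or_ne u w with h1 | h1
        · rw [show (⟨u, huL⟩ : {x // x ∈ L}) = ⟨w, hw⟩ from Subtype.ext h1,
            Equiv.swap_apply_left, h1, Equiv.swap_apply_left]
        rcases eq_or_ne u w' with h2 | h2
        · rw [show (⟨u, huL⟩ : {x // x ∈ L}) = ⟨w', hw'⟩ from Subtype.ext h2,
            Equiv.swap_apply_right, h2, Equiv.swap_apply_right]
        · rw [Equiv.swap_apply_of_ne_of_ne (fun h => h1 (Subtype.ext_iff.mp h))
            (fun h => h2 (Subtype.ext_iff.mp h)),
            Equiv.swap_apply_of_ne_of_ne h1 h2]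
      have hswL : Equiv.swap w w' u ∈ L := hcoe ▸ (Equiv.swap
        (⟨w, hw⟩ : {x // x ∈ L}) ⟨w', hw'⟩ ⟨u, huL⟩).2
      rw [hrOf, hrOf, dif_pos huL, dif_pos hswL]
      have hval : ((Equiv.swap (⟨w, hw⟩ : {x // x ∈ L}) ⟨w', hw'⟩).trans ρ) ⟨u, huL⟩
          = ρ ⟨Equiv.swap w w' u, hswL⟩ := by
        rw [Equiv.trans_apply]; exact congrArg ρ (Subtype.ext hcoe)
      rw [hval]
    · have h1 : u ≠ w := fun h => huL (h ▸ hw)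
      have h2 : u ≠ w' := fun h => huL (h ▸ hw')
      rw [Equiv.swap_apply_of_ne_of_ne h1 h2, hrOf, hrOf, dif_neg huL, dif_neg huL]
  -- swap stays in Γ'
  have hswΓ : ∀ (w : V), w ∈ Γ' → ∀ (w' : V), w' ∈ Γ' → ∀ i < j, ∀ u ∈ Γ i,
      Equiv.swap w w' u ∈ Γ i := by
    intro w hw w' hw' i hi u hu
    have hsubi : Γ' ⊆ Γ i := hΓmono i (j-1) (by omega) hj1lt
    rcases eq_or_ne u w with rfl | h1
    · rw [Equiv.swap_apply_left]; exact hsubi hw'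
    rcases eq_or_ne u w' with rfl | h2
    · rw [Equiv.swap_apply_right]; exact hsubi hw
    · rw [Equiv.swap_apply_of_ne_of_ne h1 h2]; exact hu
  -- the key invariance under swaps within Γ'
  have hinv : ∀ ρ ∈ Rset, ∀ (w : V) (hw : w ∈ Γ') (w' : V) (hw' : w' ∈ Γ'),
      ((Equiv.swap (⟨w, hΓ'L hw⟩ : {x // x ∈ L}) ⟨w', hΓ'L hw'⟩).trans ρ) ∈ Rset ∧
      f ((Equiv.swap (⟨w, hΓ'L hw⟩ : {x // x ∈ L}) ⟨w', hΓ'L hw'⟩).trans ρ)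
        = Equiv.swap w w' (f ρ) := by
    intro ρ hρ w hw w' hw'
    set ρ' := (Equiv.swap (⟨w, hΓ'L hw⟩ : {x // x ∈ L}) ⟨w', hΓ'L hw'⟩).trans ρ with hρ'
    have hr' : ∀ u, rOf ρ' u = rOf ρ (Equiv.swap w w' u) := hswapr ρ w _ w' _
    have hA : ∀ i < j, Aset adj L (rOf ρ) v i = Γ i := (hmemR ρ).mp hρ
    have hstep : ∀ i, i < j → Aset adj L (rOf ρ') v i = Γ i := by
      intro i
      induction i with
      | zero =>
        intro h
        rw [Aset_zero, ← Aset_zero adj L (rOf ρ) v]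
        exact hA 0 h
      | succ i ih =>
        intro hlt
        have hi : i < j := by omega
        have hAi : Aset adj L (rOf ρ) v i = Γ i := hA i hi
        have hAi' : Aset adj L (rOf ρ') v i = Γ i := ih hi
        have hnei : (Γ i).Nonempty := hΓne i hi
        have hinjΓ : ∀ u ∈ Γ i, ∀ u' ∈ Γ i, rOf ρ u = rOf ρ u' → u = u' :=
          fun u hu u' hu' h => hrinj ρ u (hΓL i hi hu) u' (hΓL i hi hu') h
        have hsubΓ : Γ' ⊆ Γ (i+1) := hΓmono (i+1) (j-1) (by omega) hj1lt
        have hℓnot : argminR (rOf ρ) (Γ i) ∉ Γ (i+1) := by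
          have hni : (Aset adj L (rOf ρ) v i).Nonempty := by rw [hAi]; exact hnei
          have h0 := argminR_not_mem_Aset_succ hni
          rw [hAi, hA (i+1) hlt] at h0
          exact h0
        have hℓw : argminR (rOf ρ) (Γ i) ≠ w := fun h => hℓnot (h ▸ hsubΓ hw)
        have hℓw' : argminR (rOf ρ) (Γ i) ≠ w' := fun h => hℓnot (h ▸ hsubΓ hw')
        have harg : argminR (rOf ρ') (Γ i) = argminR (rOf ρ) (Γ i) := by
          apply argminR_eq _ hnei (argminR_mem _ hnei)
          intro u hu hune
          rw [hr', hr', Equiv.swap_apply_of_ne_of_ne hℓw hℓw']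
          have hswu : Equiv.swap w w' u ∈ Γ i :=
            hswΓ w hw w' hw' i hi u hu
          have hswne : Equiv.swap w w' u ≠ argminR (rOf ρ) (Γ i) := by
            intro h
            apply hune
            have := congrArg (Equiv.swap w w') h
            rw [Equiv.swap_apply_self, Equiv.swap_apply_of_ne_of_ne hℓw hℓw'] at this
            exact this
          exact argminR_lt _ hnei hinjΓ hswu hswne
        have heq := Aset_succ_congr (r := rOf ρ') (r' := rOf ρ)
          (hAi'.trans hAi.symm) (by rw [hAi', hAi, harg])
        rw [heq]
        exact hA (i+1) hlt
    constructor
    · exact (hmemR ρ').mpr hstep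
    · -- argmin over Γ' gets swapped
      have hinjΓ' : ∀ u ∈ Γ', ∀ u' ∈ Γ', rOf ρ u = rOf ρ u' → u = u' :=
        fun u hu u' hu' h => hrinj ρ u (hΓ'L hu) u' (hΓ'L hu') h
      apply argminR_eq _ hΓ'ne (hswΓ w hw w' hw' (j-1) hj1lt _ (hfmem ρ))
      intro u hu hune
      rw [hr', hr', Equiv.swap_apply_self]
      have hswu : Equiv.swap w w' u ∈ Γ' := hswΓ w hw w' hw' (j-1) hj1lt u hu
      have hswne : Equiv.swap w w' u ≠ f ρ := by
        intro h
        apply hune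
        have := congrArg (Equiv.swap w w') h
        rw [Equiv.swap_apply_self] at this
        exact this
      exact argminR_lt _ hΓ'ne hinjΓ' hswu hswne
  -- fiber cardinalities are all equal
  have hfib : ∀ w ∈ Γ', ∀ w' ∈ Γ',
      (Rset.filter fun ρ => f ρ = w).card = (Rset.filter fun ρ => f ρ = w').card := by
    intro w hw w' hw'
    refine Finset.card_bij'
      (fun ρ _ => (Equiv.swap (⟨w, hΓ'L hw⟩ : {x // x ∈ L}) ⟨w', hΓ'L hw'⟩).trans ρ)
      (fun ρ _ => (Equiv.swap (⟨w, hΓ'L hw⟩ : {x // x ∈ L}) ⟨w', hΓ'L hw'⟩).trans ρ)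
      ?_ ?_ ?_ ?_
    · intro ρ hρ
      rw [Finset.mem_filter] at hρ ⊢
      obtain ⟨h1, h2⟩ := hρ
      obtain ⟨h3, h4⟩ := hinv ρ h1 w hw w' hw'
      exact ⟨h3, by rw [h4, h2, Equiv.swap_apply_left]⟩
    · intro ρ hρ
      rw [Finset.mem_filter] at hρ ⊢
      obtain ⟨h1, h2⟩ := hρ
      obtain ⟨h3, h4⟩ := hinv ρ h1 w hw w' hw'
      exact ⟨h3, by rw [h4, h2, Equiv.swap_apply_right]⟩
    · intro ρ _
      simp only [← Equiv.trans_assoc, Equiv.swap_swap, Equiv.refl_trans]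
    · intro ρ _
      simp only [← Equiv.trans_assoc, Equiv.swap_swap, Equiv.refl_trans]
  obtain ⟨w₀, hw₀⟩ := hΓ'ne
  have hcardR : Rset.card = m * (Rset.filter fun ρ => f ρ = w₀).card := by
    rw [Finset.card_eq_sum_card_fiberwise (f := f) (t := Γ') (fun ρ _ => hfmem ρ),
      Finset.sum_congr rfl (fun w hw => hfib w hw w₀ hw₀), Finset.sum_const, smul_eq_mul, hm]
  -- linear (topological) extension of reachability
  haveI hpo : IsPartialOrder V (reach adj) :=
    { refl := fun a => Relation.ReflTransGen.refl
      trans := fun a b c hab hbc => hab.trans hbc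
      antisymm := fun a b h1 h2 => by
        by_contra hnab
        exact hacyc a
          (((Relation.reflTransGen_iff_eq_or_transGen.mp h1).resolve_left
            (fun h => hnab h.symm)).trans_left h2) }
  obtain ⟨s, hlin, hsubs⟩ := extend_partialOrder (reach adj)
  haveI := hlin
  set g : V → ℕ := fun w => (Γ'.filter fun u => Relation.TransGen adj w u).card with hg
  set aft : V → ℕ := fun w => (Γ'.filter fun u => s w u ∧ u ≠ w).card with haft
  have hga : ∀ w : V, g w ≤ aft w := by
    intro w
    apply Finset.card_le_card
    intro u hu
    rw [Finset.mem_filter] at hu ⊢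
    exact ⟨hu.1, hsubs _ _ hu.2.to_reflTransGen, fun he => hacyc w (he ▸ hu.2)⟩
  have haftlt : ∀ w ∈ Γ', aft w < m := by
    intro w hw
    apply Finset.card_lt_card
    rw [Finset.ssubset_iff_of_subset (Finset.filter_subset _ _)]
    exact ⟨w, hw, by simp⟩
  have hstrict : ∀ w ∈ Γ', ∀ w' ∈ Γ', w ≠ w' → s w w' → aft w' < aft w := by
    intro w hw w' hw' hnewac hs
    apply Finset.card_lt_card
    rw [Finset.ssubset_iff_of_subset]
    · refine ⟨w', ?_, ?_⟩
      · rw [Finset.mem_filter]; exact ⟨hw', hs, Ne.symm hnewac⟩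
      · rw [Finset.mem_filter]; rintro ⟨-, -, h⟩; exact h rfl
    · intro u hu
      rw [Finset.mem_filter] at hu ⊢
      obtain ⟨huΓ, hsu, hune⟩ := hu
      refine ⟨huΓ, IsTrans.trans _ _ _ hs hsu, fun he => hnewac (_root_.antisymm hs (he ▸ hsu))⟩
  have hinjaft : ∀ w ∈ Γ', ∀ w' ∈ Γ', aft w = aft w' → w = w' := by
    intro w hw w' hw' he
    by_contra hnewac
    rcases total_of s w w' with h | h
    · have := hstrict w hw w' hw' hnewac h; omega
    · have := hstrict w' hw' w hw (Ne.symm hnewac) h; omega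
  have himg : Γ'.image aft = Finset.range m := by
    apply Finset.eq_of_subset_of_card_le
    · intro k hk
      rw [Finset.mem_image] at hk
      obtain ⟨w, hw, rfl⟩ := hk
      rw [Finset.mem_range]
      exact haftlt w hw
    · rw [Finset.card_range, Finset.card_image_of_injOn
        (fun a ha b hb hab => hinjaft a (Finset.mem_coe.mp ha) b (Finset.mem_coe.mp hb) hab)]
  have hxm0 : (0:ℝ) ≤ x * m := mul_nonneg hx0 (Nat.cast_nonneg m)
  have hcf : (Γ'.filter fun w => ((aft w : ℝ) ≤ x * m)).card
      = ((Finset.range m).filter fun k : ℕ => ((k:ℝ) ≤ x * m)).card := by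
    apply Finset.card_nbij (i := aft)
    · intro a ha
      rw [Finset.mem_coe, Finset.mem_filter] at ha ⊢
      rw [Finset.mem_range]
      exact ⟨haftlt a ha.1, ha.2⟩
    · intro a ha b hb hab
      exact hinjaft a (Finset.filter_subset _ _ (Finset.mem_coe.mp ha)) b
        (Finset.filter_subset _ _ (Finset.mem_coe.mp hb)) hab
    · intro k hk
      rw [Finset.mem_coe, Finset.mem_filter, Finset.mem_range] at hk
      have hkim : k ∈ Γ'.image aft := by rw [himg, Finset.mem_range]; exact hk.1
      rw [Finset.mem_image] at hkim
      obtain ⟨w, hw, rfl⟩ := hkim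
      exact Set.mem_image_of_mem _ (Finset.mem_coe.mpr (Finset.mem_filter.mpr ⟨hw, hk.2⟩))
  have hrange : ((Finset.range m).filter fun k : ℕ => ((k:ℝ) ≤ x * m))
      = Finset.range (min (⌊x*m⌋₊ + 1) m) := by
    ext k
    simp only [Finset.mem_filter, Finset.mem_range, ← Nat.le_floor_iff hxm0, lt_min_iff,
      Nat.lt_succ_iff]
    tauto
  have hGoodcard : (x * m : ℝ) ≤ ((Γ'.filter fun w => ((g w : ℝ) ≤ x * m)).card : ℝ) := by
    have hsub1 : (Γ'.filter fun w => ((aft w : ℝ) ≤ x * m))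
        ⊆ (Γ'.filter fun w => ((g w : ℝ) ≤ x * m)) := by
      intro w hw
      rw [Finset.mem_filter] at hw ⊢
      exact ⟨hw.1, le_trans (Nat.cast_le.mpr (hga w)) hw.2⟩
    refine le_trans ?_ (Nat.cast_le.mpr (Finset.card_le_card hsub1))
    rw [hcf, hrange, Finset.card_range]
    rcases le_total (⌊x*m⌋₊ + 1) m with hmin | hmin
    · rw [min_eq_left hmin]
      push_cast
      exact le_of_lt (Nat.lt_floor_add_one _)
    · rw [min_eq_right hmin]
      calc x * m ≤ 1 * m := mul_le_mul_of_nonneg_right hx1 (Nat.cast_nonneg m)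
        _ = m := one_mul _
  -- per-ranking bound
  have hkey : ∀ ρ ∈ Rset, ((Aset adj L (rOf ρ) v j).card : ℝ) ≤ (g (f ρ) : ℝ) := by
    intro ρ hρ
    have hA := (hmemR ρ).mp hρ
    have hAj1 : Aset adj L (rOf ρ) v (j-1) = Γ' := hA _ hj1lt
    have hnj : (Aset adj L (rOf ρ) v (j-1)).Nonempty := by rw [hAj1]; exact ⟨w₀, hw₀⟩
    have hsubkey : Aset adj L (rOf ρ) v j
        ⊆ Γ'.filter (fun u => Relation.TransGen adj (f ρ) u) := by
      intro u hu
      have hu' : u ∈ Aset adj L (rOf ρ) v ((j-1)+1) := by rw [hj1]; exact hu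
      obtain ⟨h1, h2⟩ := Aset_succ_key hacyc hnj u hu'
      rw [hAj1] at h1 h2
      rw [Finset.mem_filter]
      exact ⟨h1, h2⟩
    exact Nat.cast_le.mpr (Finset.card_le_card hsubkey)
  have hsubTgt : (Rset.filter fun ρ => f ρ ∈ (Γ'.filter fun w => ((g w : ℝ) ≤ x * m)))
      ⊆ (Rset.filter fun ρ => ((Aset adj L (rOf ρ) v j).card : ℝ) ≤ x * (m : ℝ)) := by
    intro ρ hρ
    rw [Finset.mem_filter] at hρ ⊢
    obtain ⟨h1, h2⟩ := hρ
    rw [Finset.mem_filter] at h2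
    exact ⟨h1, le_trans (hkey ρ h1) h2.2⟩
  have hfibGood : ∀ w ∈ (Γ'.filter fun w => ((g w : ℝ) ≤ x * m)),
      ((Rset.filter fun ρ => f ρ ∈ (Γ'.filter fun w' => ((g w' : ℝ) ≤ x * m))).filter
        (fun ρ => f ρ = w)).card = (Rset.filter fun ρ => f ρ = w₀).card := by
    intro w hwG
    have hwΓ : w ∈ Γ' := Finset.filter_subset _ _ hwG
    have heqf : (Rset.filter fun ρ => f ρ ∈ (Γ'.filter fun w' => ((g w' : ℝ) ≤ x * m))).filter
        (fun ρ => f ρ = w) = Rset.filter (fun ρ => f ρ = w) := by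
      ext ρ
      simp only [Finset.mem_filter]
      constructor
      · rintro ⟨⟨h1, h2⟩, h3⟩; exact ⟨h1, h3⟩
      · rintro ⟨h1, h3⟩
        refine ⟨⟨h1, ?_⟩, h3⟩
        rw [h3]
        exact Finset.mem_filter.mp hwG
    rw [heqf]
    exact hfib w hwΓ w₀ hw₀
  have hcGood : (Rset.filter fun ρ => f ρ ∈ (Γ'.filter fun w => ((g w : ℝ) ≤ x * m))).card
      = (Γ'.filter fun w => ((g w : ℝ) ≤ x * m)).card
        * (Rset.filter fun ρ => f ρ = w₀).card := by
    rw [Finset.card_eq_sum_card_fiberwise (f := f)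
      (s := Rset.filter fun ρ => f ρ ∈ (Γ'.filter fun w => ((g w : ℝ) ≤ x * m)))
      (t := Γ'.filter fun w => ((g w : ℝ) ≤ x * m))
      (fun ρ hρ => (Finset.mem_filter.mp hρ).2),
      Finset.sum_congr rfl hfibGood, Finset.sum_const, smul_eq_mul]
  calc x * (Rset.card : ℝ)
      = (x * m) * ((Rset.filter fun ρ => f ρ = w₀).card : ℝ) := by
        rw [hcardR]; push_cast; ring
    _ ≤ ((Γ'.filter fun w => ((g w : ℝ) ≤ x * m)).card : ℝ)
          * ((Rset.filter fun ρ => f ρ = w₀).card : ℝ) :=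
        mul_le_mul_of_nonneg_right hGoodcard (Nat.cast_nonneg _)
    _ = ((Rset.filter fun ρ => f ρ ∈ (Γ'.filter fun w => ((g w : ℝ) ≤ x * m))).card : ℝ) := by
        rw [hcGood]; push_cast; ring
    _ ≤ _ := Nat.cast_le.mpr (Finset.card_le_card hsubTgt)

end
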